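/- Let Φ and Ψ be stable linear flows on X = ℝ^d, and assume some h ∈ H_1(X) maps every Φ-orbit onto a Ψ-orbit. Then h(D^Φ) = D^Ψ, where D^Φ and D^Ψ denote the sets of distortion points of Φ and Ψ. -/

import Mathlib

open Filter Topology Matrix Metric
open scoped ENNReal NNReal

noncomputable section

/-- `X = ℝ^d` with the Euclidean norm. -/
abbrev Euc (d : ℕ) : Type := EuclideanSpace ℝ (Fin d)

/-- The time-`t` map `x ↦ exp(tA) x` of the linear flow generated by the matrix `A`. -/
def flowMap {d : ℕ} (A : Matrix (Fin d) (Fin d) ℝ) (t : ℝ) : Euc d →L[ℝ] Euc d :=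
  Matrix.toEuclideanCLM (𝕜 := ℝ) (NormedSpace.exp (t • A))

/-- The linear flow generated by `A`. -/
def linFlow {d : ℕ} (A : Matrix (Fin d) (Fin d) ℝ) (t : ℝ) (x : Euc d) : Euc d :=
  flowMap A t x

/-- The orbit of `x` under the linear flow generated by `A`. -/
def flowOrbit {d : ℕ} (A : Matrix (Fin d) (Fin d) ℝ) (x : Euc d) : Set (Euc d) :=
  Set.range fun t : ℝ => linFlow A t x

/-- `H_0(X)`: homeomorphisms of `X` fixing `0`. -/
def IsH0 {d : ℕ} (h : Euc d ≃ₜ Euc d) : Prop := h 0 = 0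

/-- `H_1(X)`: homeomorphisms fixing `0` such that `h, h⁻¹` are Lipschitz near `0`. -/
def IsH1 {d : ℕ} (h : Euc d ≃ₜ Euc d) : Prop :=
  h 0 = 0 ∧ ∃ r : ℝ, 0 < r ∧ ∃ K : ℝ≥0,
    LipschitzOnWith K (⇑h) (ball (0 : Euc d) r) ∧
    LipschitzOnWith K (⇑h.symm) (ball (0 : Euc d) r)

/-- `H_{1⁻}(X)`: homeomorphisms fixing `0` such that `h, h⁻¹` are `β`-Hölder near `0`
for every `β ∈ (0,1)`. -/
def IsHHolder {d : ℕ} (h : Euc d ≃ₜ Euc d) : Prop :=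
  h 0 = 0 ∧ ∀ β : ℝ, 0 < β → β < 1 → ∃ r : ℝ, 0 < r ∧ ∃ C : ℝ≥0,
    HolderOnWith C β.toNNReal (⇑h) (ball (0 : Euc d) r) ∧
    HolderOnWith C β.toNNReal (⇑h.symm) (ball (0 : Euc d) r)

/-- `H_diff(X)`: homeomorphisms fixing `0` with `h, h⁻¹` differentiable at `0`. -/
def IsHDiff {d : ℕ} (h : Euc d ≃ₜ Euc d) : Prop :=
  h 0 = 0 ∧ DifferentiableAt ℝ (⇑h) 0 ∧ DifferentiableAt ℝ (⇑h.symm) 0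

/-- `H_lin(X)`: linear homeomorphisms. -/
def IsHLin {d : ℕ} (h : Euc d ≃ₜ Euc d) : Prop := IsLinearMap ℝ (⇑h)

/-- `H_pw1(X)`: homeomorphisms fixing `0` that are pointwise Lipschitz at `0`, i.e.
`sup_{x ∈ B_r(0), x ≠ 0} (|h(x)| + |h⁻¹(x)|)/|x| < ∞` for some `r > 0`. -/
def IsHPw1 {d : ℕ} (h : Euc d ≃ₜ Euc d) : Prop :=
  h 0 = 0 ∧ ∃ r : ℝ, 0 < r ∧ ∃ C : ℝ,
    ∀ x ∈ ball (0 : Euc d) r, ‖h x‖ + ‖h.symm x‖ ≤ C * ‖x‖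

/-- `h` maps each orbit of the flow generated by `A` onto an orbit of the flow generated by `B`. -/
def EquivVia {d : ℕ} (A B : Matrix (Fin d) (Fin d) ℝ) (h : Euc d ≃ₜ Euc d) : Prop :=
  ∀ x : Euc d, ⇑h '' flowOrbit A x = flowOrbit B (h x)

/-- `h` conjugates the flows generated by `A` and `B`. -/
def ConjVia {d : ℕ} (A B : Matrix (Fin d) (Fin d) ℝ) (h : Euc d ≃ₜ Euc d) : Prop :=
  ∀ (t : ℝ) (x : Euc d), h (linFlow A t x) = linFlow B t (h x)

def TopEquiv {d : ℕ} (A B : Matrix (Fin d) (Fin d) ℝ) : Prop := ∃ h, IsH0 h ∧ EquivVia A B h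
def HolderEquiv {d : ℕ} (A B : Matrix (Fin d) (Fin d) ℝ) : Prop := ∃ h, IsHHolder h ∧ EquivVia A B h
def LipEquiv {d : ℕ} (A B : Matrix (Fin d) (Fin d) ℝ) : Prop := ∃ h, IsH1 h ∧ EquivVia A B h
def DiffEquiv {d : ℕ} (A B : Matrix (Fin d) (Fin d) ℝ) : Prop := ∃ h, IsHDiff h ∧ EquivVia A B h
def LinEquiv {d : ℕ} (A B : Matrix (Fin d) (Fin d) ℝ) : Prop := ∃ h, IsHLin h ∧ EquivVia A B h
def PwEquiv {d : ℕ} (A B : Matrix (Fin d) (Fin d) ℝ) : Prop := ∃ h, IsHPw1 h ∧ EquivVia A B h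

def TopConj {d : ℕ} (A B : Matrix (Fin d) (Fin d) ℝ) : Prop := ∃ h, IsH0 h ∧ ConjVia A B h
def HolderConj {d : ℕ} (A B : Matrix (Fin d) (Fin d) ℝ) : Prop := ∃ h, IsHHolder h ∧ ConjVia A B h
def LipConj {d : ℕ} (A B : Matrix (Fin d) (Fin d) ℝ) : Prop := ∃ h, IsH1 h ∧ ConjVia A B h
def DiffConj {d : ℕ} (A B : Matrix (Fin d) (Fin d) ℝ) : Prop := ∃ h, IsHDiff h ∧ ConjVia A B h
def LinConj {d : ℕ} (A B : Matrix (Fin d) (Fin d) ℝ) : Prop := ∃ h, IsHLin h ∧ ConjVia A B h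
def PwConj {d : ℕ} (A B : Matrix (Fin d) (Fin d) ℝ) : Prop := ∃ h, IsHPw1 h ∧ ConjVia A B h

/-- Fixed points of the flow generated by `A`. -/
def fixSet {d : ℕ} (A : Matrix (Fin d) (Fin d) ℝ) : Set (Euc d) :=
  {x | ∀ t : ℝ, linFlow A t x = x}

/-- `Per_T`: the `T`-periodic points of the flow generated by `A`. -/
def perSet {d : ℕ} (A : Matrix (Fin d) (Fin d) ℝ) (T : ℝ) : Set (Euc d) :=
  {x | linFlow A T x = x}

/-- The minimal period `T_x = inf {t > 0 : Φ_t x = x} ∈ [0,∞]` (with `inf ∅ = ∞`). -/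
def minPer {d : ℕ} (A : Matrix (Fin d) (Fin d) ℝ) (x : Euc d) : ℝ≥0∞ :=
  sInf ((fun t : ℝ => ENNReal.ofReal t) '' {t : ℝ | 0 < t ∧ linFlow A t x = x})

/-- The central space `X_C = {x : e^{-ε|t|} Φ_t x → 0 as |t| → ∞, for every ε > 0}`. -/
def centralSet {d : ℕ} (A : Matrix (Fin d) (Fin d) ℝ) : Set (Euc d) :=
  {x | ∀ ε : ℝ, 0 < ε →
    Tendsto (fun t : ℝ => Real.exp (-(ε * |t|)) • linFlow A t x) (cocompact ℝ) (𝓝 0)}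

/-- The stable space `X_S = {x : Φ_t x → 0 as t → ∞}`. -/
def stableSet {d : ℕ} (A : Matrix (Fin d) (Fin d) ℝ) : Set (Euc d) :=
  {x | Tendsto (fun t : ℝ => linFlow A t x) atTop (𝓝 0)}

/-- The unstable space `X_U = {x : Φ_t x → 0 as t → -∞}`. -/
def unstableSet {d : ℕ} (A : Matrix (Fin d) (Fin d) ℝ) : Set (Euc d) :=
  {x | Tendsto (fun t : ℝ => linFlow A t x) atBot (𝓝 0)}

/-- A flow is stable if every orbit converges to `0` in forward time. -/
def IsStableFlow {d : ℕ} (A : Matrix (Fin d) (Fin d) ℝ) : Prop := stableSet A = Set.univ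

/-- A flow is hyperbolic if `X = X_S ⊕ X_U`. -/
def IsHyperbolicFlow {d : ℕ} (A : Matrix (Fin d) (Fin d) ℝ) : Prop :=
  (∀ x : Euc d, ∃ y ∈ stableSet A, ∃ z ∈ unstableSet A, x = y + z) ∧
    stableSet A ∩ unstableSet A ⊆ {0}

/-- The continuous linear map on `ℝ^d` induced by a matrix. -/
def matCLM {d : ℕ} (A : Matrix (Fin d) (Fin d) ℝ) : Euc d →L[ℝ] Euc d :=
  Matrix.toEuclideanCLM (𝕜 := ℝ) A

/-- Similarity of square matrices: `A = P⁻¹ B P` for some invertible `P`. -/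
def MatSimilar {n : Type*} [Fintype n] [DecidableEq n] (A B : Matrix n n ℝ) : Prop :=
  ∃ P : (Matrix n n ℝ)ˣ, A = (↑(P⁻¹) : Matrix n n ℝ) * B * (↑P : Matrix n n ℝ)

/-- The generators of the restrictions of the two flows to their central spaces are similar;
this is expressed via a global linear equivalence mapping the central space of `A` onto that of
`B` and intertwining the two generators there. -/
def CentralPartsSimilar {d : ℕ} (A B : Matrix (Fin d) (Fin d) ℝ) : Prop :=
  ∃ P : Euc d ≃ₗ[ℝ] Euc d, ⇑P '' centralSet A = centralSet B ∧
    ∀ x ∈ centralSet A, P (matCLM A x) = matCLM B (P x)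

/-- `d(b)`: the size weight, `1` if `b = 0` and `2` otherwise. -/
def dsz (b : ℝ) : ℕ := if b = 0 then 1 else 2

/-- The real Jordan block `J_m(a+ib)`, of size `m·d(b)`:  for `b = 0` this is `a·I_m + J_m`
(ones on the superdiagonal), and for `b ≠ 0` it is `a·I_{2m} + [[J_m, -b·I_m],[b·I_m, J_m]]`. -/
def jordanBlock (m : ℕ) (a b : ℝ) : Matrix (Fin (m * dsz b)) (Fin (m * dsz b)) ℝ :=
  Matrix.of fun i j =>
    (if (i : ℕ) = (j : ℕ) then a else 0) +
    (if (i : ℕ) + 1 = (j : ℕ) ∧ (j : ℕ) ≠ m then (1 : ℝ) else 0) +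
    (if (j : ℕ) = (i : ℕ) + m then -b else 0) +
    (if (i : ℕ) = (j : ℕ) + m then b else 0)

/-- `ℒJ_m(a+ib)`: equal to `a·I` if `m = 1`, and to `J_m(a+ib)` if `m ≥ 2`. -/
def lipJordanBlock (m : ℕ) (a b : ℝ) : Matrix (Fin (m * dsz b)) (Fin (m * dsz b)) ℝ :=
  if m = 1 then a • (1 : Matrix (Fin (m * dsz b)) (Fin (m * dsz b)) ℝ) else jordanBlock m a b

/-- `𝒦J_m(a+ib)`: equal to `J_m(a)` if `b = 0`, and to `diag[J_m(a), J_m(a)]` if `b ≠ 0`. -/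
def kinJordanBlock (m : ℕ) (a b : ℝ) : Matrix (Fin (m * dsz b)) (Fin (m * dsz b)) ℝ :=
  Matrix.of fun i j =>
    (if (i : ℕ) = (j : ℕ) then a else 0) +
    (if (i : ℕ) + 1 = (j : ℕ) ∧ (j : ℕ) ≠ m then (1 : ℝ) else 0)

/-- Block-diagonal matrix with variable-size blocks, in the given order. -/
def blockDiagAux : ∀ (k : ℕ) (sz : Fin k → ℕ),
    (∀ j, Matrix (Fin (sz j)) (Fin (sz j)) ℝ) →
    Matrix (Fin (∑ j, sz j)) (Fin (∑ j, sz j)) ℝ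
  | 0, _, _ => 0
  | k + 1, sz, M =>
    Matrix.reindex (finSumFinEquiv.trans (finCongr (Fin.sum_univ_succ sz).symm))
      (finSumFinEquiv.trans (finCongr (Fin.sum_univ_succ sz).symm))
      (Matrix.fromBlocks (M 0) 0 0
        (blockDiagAux k (fun j => sz j.succ) (fun j => M j.succ)))

/-- `diag[M_1, …, M_k]` as a `n × n` matrix, where `n = ∑ (size of M_j)`. -/
def blockDiag {k n : ℕ} (sz : Fin k → ℕ) (M : ∀ j, Matrix (Fin (sz j)) (Fin (sz j)) ℝ)
    (h : ∑ j, sz j = n) : Matrix (Fin n) (Fin n) ℝ :=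
  Matrix.reindex (finCongr h) (finCongr h) (blockDiagAux k sz M)

/-- The data of a real Jordan form of total size `n`: block sizes `m j`, eigenvalues
`a j + i (b j)`. -/
structure JordanData (n : ℕ) where
  k : ℕ
  m : Fin k → ℕ
  a : Fin k → ℝ
  b : Fin k → ℝ
  hm : ∀ j, 0 < m j
  hsum : ∑ j, m j * dsz (b j) = n

/-- The block-diagonal matrix `diag[J_{m_1}(z_1), …, J_{m_k}(z_k)]` of a Jordan data. -/
def JordanData.mat {n : ℕ} (D : JordanData n) : Matrix (Fin n) (Fin n) ℝ :=
  blockDiag (fun j => D.m j * dsz (D.b j)) (fun j => jordanBlock (D.m j) (D.a j) (D.b j)) D.hsum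

/-- The matrix `diag[ℒJ_{m_1}(z_1), …, ℒJ_{m_k}(z_k)]` of a Jordan data. -/
def JordanData.lipMat {n : ℕ} (D : JordanData n) : Matrix (Fin n) (Fin n) ℝ :=
  blockDiag (fun j => D.m j * dsz (D.b j)) (fun j => lipJordanBlock (D.m j) (D.a j) (D.b j)) D.hsum

/-- The matrix `diag[𝒦J_{m_1}(z_1), …, 𝒦J_{m_k}(z_k)]` of a Jordan data. -/
def JordanData.kinMat {n : ℕ} (D : JordanData n) : Matrix (Fin n) (Fin n) ℝ :=
  blockDiag (fun j => D.m j * dsz (D.b j)) (fun j => kinJordanBlock (D.m j) (D.a j) (D.b j)) D.hsum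

/-- `A`, `B` are Lipschitz similar: `ℒA` and `ℒB` are similar (via real Jordan forms). -/
def LipSimilar {n : ℕ} (A B : Matrix (Fin n) (Fin n) ℝ) : Prop :=
  ∃ DA DB : JordanData n, MatSimilar A DA.mat ∧ MatSimilar B DB.mat ∧
    MatSimilar DA.lipMat DB.lipMat

/-- `A`, `B` are kinematically similar: `𝒦A` and `𝒦B` are similar (via real Jordan forms). -/
def KinSimilar {n : ℕ} (A B : Matrix (Fin n) (Fin n) ℝ) : Prop :=
  ∃ DA DB : JordanData n, MatSimilar A DA.mat ∧ MatSimilar B DB.mat ∧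
    MatSimilar DA.kinMat DB.kinMat

/-- The Lyapunov space `L(s) = {x : λ₊(x) ≤ s} = {x : ∀ ε > 0, e^{-(s+ε)t} Φ_t x → 0}`. -/
def lyapSpace {d : ℕ} (A : Matrix (Fin d) (Fin d) ℝ) (s : ℝ) : Set (Euc d) :=
  {x | ∀ ε : ℝ, 0 < ε →
    Tendsto (fun t : ℝ => Real.exp (-((s + ε) * t)) • linFlow A t x) atTop (𝓝 0)}

/-- `L(s⁻) = {x : e^{-st} Φ_t x → 0 as t → ∞}`. -/
def lyapSpaceMinus {d : ℕ} (A : Matrix (Fin d) (Fin d) ℝ) (s : ℝ) : Set (Euc d) :=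
  {x | Tendsto (fun t : ℝ => Real.exp (-(s * t)) • linFlow A t x) atTop (𝓝 0)}

/-- The refined Lyapunov space `L_m(s) = {x : Φ_t x / (e^{st} t^m) → 0 as t → ∞}`. -/
def refLyapSpace {d : ℕ} (A : Matrix (Fin d) (Fin d) ℝ) (m : ℕ) (s : ℝ) : Set (Euc d) :=
  {x | Tendsto (fun t : ℝ => (Real.exp (s * t) * t ^ m)⁻¹ • linFlow A t x) atTop (𝓝 0)}

/-- The dimension of a subset of `ℝ^d` (the dimension of its span). -/
def setDim {d : ℕ} (s : Set (Euc d)) : ℕ := Module.finrank ℝ (Submodule.span ℝ s)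

/-- `ℓ(s) = dim L(s)`. -/
def lyapDim {d : ℕ} (A : Matrix (Fin d) (Fin d) ℝ) (s : ℝ) : ℕ := setDim (lyapSpace A s)

/-- `A`, `B` are Lyapunov similar: the generated flows have the same Lyapunov exponents with
matching multiplicities, i.e. `dim L^Φ(s) = dim L^Ψ(s)` for every `s`. -/
def LyapSimilar {d : ℕ} (A B : Matrix (Fin d) (Fin d) ℝ) : Prop :=
  ∀ s : ℝ, lyapDim A s = lyapDim B s

/-- The `j`-th Lyapunov exponent (counted with multiplicity, in increasing order):
`λ_j = inf {s : dim L(s) ≥ j}`. -/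
def nthLyap {d : ℕ} (A : Matrix (Fin d) (Fin d) ℝ) (j : ℕ) : ℝ :=
  sInf {s : ℝ | j ≤ lyapDim A s}

/-- The largest Lyapunov exponent `λ = min {s : L(s) = X}`. -/
def maxLyap {d : ℕ} (A : Matrix (Fin d) (Fin d) ℝ) : ℝ :=
  sInf {s : ℝ | lyapSpace A s = Set.univ}

/-- `m^Φ = min {m : L_m(λ^Φ) = X}`. -/
def mIdx {d : ℕ} (A : Matrix (Fin d) (Fin d) ℝ) : ℕ :=
  sInf {m : ℕ | refLyapSpace A m (maxLyap A) = Set.univ}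

/-- The ratio `|Φ_t x - Φ_{ρ(t)} y| / |Φ_{ρ(t)} y|`, valued in `[0,∞]`. -/
def distortRatio {d : ℕ} (A : Matrix (Fin d) (Fin d) ℝ) (x y : Euc d) (ρ : ℝ → ℝ) (t : ℝ) :
    ℝ≥0∞ :=
  ENNReal.ofReal (‖linFlow A t x - linFlow A (ρ t) y‖ / ‖linFlow A (ρ t) y‖)

/-- `x` is `δ`-distorting for the (stable) flow generated by `A`. -/
def IsDistorting {d : ℕ} (A : Matrix (Fin d) (Fin d) ℝ) (δ : ℝ) (x : Euc d) : Prop :=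
  ∀ ε : ℝ, 0 < ε → ∃ y ∈ ball x ε, y ≠ (0 : Euc d) ∧
    ∀ ρ : ℝ → ℝ, Continuous ρ → Tendsto ρ atTop atTop →
      ENNReal.ofReal δ ≤ limsup (fun t => distortRatio A x y ρ t) atTop

/-- The set `D^Φ` of distortion points. -/
def distortionSet {d : ℕ} (A : Matrix (Fin d) (Fin d) ℝ) : Set (Euc d) :=
  {x | ∃ δ : ℝ, 0 < δ ∧ IsDistorting A δ x}

/-- `τ` is the time reparametrization of the orbit of `x` induced by `h`. -/
def IsReparam {d : ℕ} (A B : Matrix (Fin d) (Fin d) ℝ) (h : Euc d ≃ₜ Euc d) (x : Euc d)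
    (τ : ℝ → ℝ) : Prop :=
  Continuous τ ∧ Function.Bijective τ ∧ τ 0 = 0 ∧
    ∀ t : ℝ, h (linFlow A t x) = linFlow B (τ t) (h x)

/-- The five regularity classes `⋆ ∈ {0, 1⁻, 1, diff, lin}`. -/
inductive StarClass : Type
  | top : StarClass
  | holder : StarClass
  | lip : StarClass
  | diff : StarClass
  | lin : StarClass

/-- Membership in `H_⋆(X)`. -/
def IsHStar {d : ℕ} (s : StarClass) (h : Euc d ≃ₜ Euc d) : Prop :=
  match s with
  | .top => IsH0 h
  | .holder => IsHHolder h
  | .lip => IsH1 h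
  | .diff => IsHDiff h
  | .lin => IsHLin h

/-- The spectrum of a real matrix, as a set of complex numbers. -/
def cSpec {n : ℕ} (A : Matrix (Fin n) (Fin n) ℝ) : Set ℂ :=
  spectrum ℂ (A.map (algebraMap ℝ ℂ))

/-- The class `[A]_1` of generators whose flows are Lipschitz equivalent to that of `A`. -/
def lipClass {d : ℕ} (A : Matrix (Fin d) (Fin d) ℝ) : Set (Matrix (Fin d) (Fin d) ℝ) :=
  {B | LipEquiv A B}

/-- The class `[A]_diff`. -/
def diffClass {d : ℕ} (A : Matrix (Fin d) (Fin d) ℝ) : Set (Matrix (Fin d) (Fin d) ℝ) :=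
  {B | DiffEquiv A B}

/-- The class `[A]_{1⁻}`. -/
def holderClass {d : ℕ} (A : Matrix (Fin d) (Fin d) ℝ) : Set (Matrix (Fin d) (Fin d) ℝ) :=
  {B | HolderEquiv A B}

/-- `diag[J_1(i b_1), …, J_1(i b_k)]`. -/
def rotGen {k n : ℕ} (b : Fin k → ℝ) (h : ∑ j, dsz (b j) = n) : Matrix (Fin n) (Fin n) ℝ :=
  blockDiag (fun j => 1 * dsz (b j)) (fun j => jordanBlock 1 0 (b j)) (by simpa using h)

/-- `diag[J_1(-1 + i b_1), …, J_1(-1 + i b_k)]`. -/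
def negRotGen {k n : ℕ} (b : Fin k → ℝ) (h : ∑ j, dsz (b j) = n) : Matrix (Fin n) (Fin n) ℝ :=
  blockDiag (fun j => 1 * dsz (b j)) (fun j => jordanBlock 1 (-1) (b j)) (by simpa using h)

/-- `diag[J_m(-1 + i b_1), …, J_m(-1 + i b_k)]` (all blocks of equal size `m`). -/
def jmGen {k n : ℕ} (m : ℕ) (b : Fin k → ℝ) (h : m * ∑ j, dsz (b j) = n) :
    Matrix (Fin n) (Fin n) ℝ :=
  blockDiag (fun j => m * dsz (b j)) (fun j => jordanBlock m (-1) (b j))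
    (by rw [← Finset.mul_sum]; exact h)

/-- `diag[J_{m_1}(-1 + i b_1), …, J_{m_k}(-1 + i b_k), A_0]`. -/
def mixedGen {k k0 n : ℕ} (m : Fin k → ℕ) (b : Fin k → ℝ)
    (A0 : Matrix (Fin k0) (Fin k0) ℝ) (h : (∑ j, m j * dsz (b j)) + k0 = n) :
    Matrix (Fin n) (Fin n) ℝ :=
  Matrix.reindex (finSumFinEquiv.trans (finCongr h)) (finSumFinEquiv.trans (finCongr h))
    (Matrix.fromBlocks
      (blockDiag (fun j => m j * dsz (b j)) (fun j => jordanBlock (m j) (-1) (b j)) rfl)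
      0 0 A0)

/-- The operator norm (w.r.t. the Euclidean norm) of a matrix. -/
def opNorm {n : ℕ} (M : Matrix (Fin n) (Fin n) ℝ) : ℝ :=
  ‖Matrix.toEuclideanCLM (𝕜 := ℝ) M‖

end
noncomputable section
namespace DPaux
set_option maxHeartbeats 1000000
set_option synthInstance.maxHeartbeats 400000
open Filter Topology Matrix Metric
open scoped ENNReal NNReal

attribute [local instance] Matrix.linftyOpNormedRing Matrix.linftyOpNormedAlgebra

variable {d : ℕ}

lemma toEuclideanCLM_continuous :
    Continuous (Matrix.toEuclideanCLM (𝕜 := ℝ) (n := Fin d) : Matrix (Fin d) (Fin d) ℝ → _) := by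
  let f : Matrix (Fin d) (Fin d) ℝ →ₗ[ℝ] (Euc d →L[ℝ] Euc d) :=
    { toFun := Matrix.toEuclideanCLM (𝕜 := ℝ),
      map_add' := by simp,
      map_smul' := by simp }
  exact f.continuous_of_finiteDimensional

lemma flowMap_eq (A : Matrix (Fin d) (Fin d) ℝ) (t : ℝ) :
    flowMap A t = NormedSpace.exp (t • (Matrix.toEuclideanCLM (𝕜 := ℝ) A)) := by
  rw [flowMap, ← _root_.map_smul]
  exact NormedSpace.map_exp (Matrix.toEuclideanCLM (𝕜 := ℝ)) toEuclideanCLM_continuous _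

lemma flowMap_add (A : Matrix (Fin d) (Fin d) ℝ) (s t : ℝ) :
    flowMap A (s + t) = (flowMap A s).comp (flowMap A t) := by
  unfold flowMap
  rw [add_smul, Matrix.exp_add_of_commute _ _ (((Commute.refl A).smul_left s).smul_right t),
    _root_.map_mul]
  rfl

lemma flowMap_zero (A : Matrix (Fin d) (Fin d) ℝ) :
    flowMap A 0 = ContinuousLinearMap.id ℝ (Euc d) := by
  unfold flowMap
  rw [zero_smul, NormedSpace.exp_zero, _root_.map_one]
  rfl

lemma linFlow_add (A : Matrix (Fin d) (Fin d) ℝ) (s t : ℝ) (x : Euc d) :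
    linFlow A (s + t) x = linFlow A s (linFlow A t x) := by
  simp [linFlow, flowMap_add]

lemma linFlow_zero (A : Matrix (Fin d) (Fin d) ℝ) (x : Euc d) : linFlow A 0 x = x := by
  simp [linFlow, flowMap_zero]

lemma linFlow_zero_pt (A : Matrix (Fin d) (Fin d) ℝ) (t : ℝ) : linFlow A t (0 : Euc d) = 0 := by
  simp [linFlow]

lemma linFlow_inj_x (A : Matrix (Fin d) (Fin d) ℝ) (t : ℝ) :
    Function.Injective (linFlow A t) := by
  intro a b hab
  have := congrArg (linFlow A (-t)) hab
  rwa [← linFlow_add, ← linFlow_add, neg_add_cancel, linFlow_zero, linFlow_zero] at this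

lemma linFlow_eq_zero_iff (A : Matrix (Fin d) (Fin d) ℝ) (t : ℝ) (x : Euc d) :
    linFlow A t x = 0 ↔ x = 0 := by
  constructor
  · intro hx
    apply linFlow_inj_x A t
    rw [hx, linFlow_zero_pt]
  · rintro rfl; exact linFlow_zero_pt A t

lemma linFlow_cont (A : Matrix (Fin d) (Fin d) ℝ) (x : Euc d) :
    Continuous fun t : ℝ => linFlow A t x := by
  have h1 : Continuous fun t : ℝ => flowMap A t := by
    simp only [flowMap_eq]
    refine Continuous.comp (g := NormedSpace.exp) ?_ (continuous_id.smul continuous_const)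
    exact continuous_iff_continuousAt.2 fun y => (NormedSpace.exp_analytic (𝕂 := ℝ) y).continuousAt
  exact (ContinuousLinearMap.apply ℝ (Euc d) x).continuous.comp h1

lemma stable_tendsto {A : Matrix (Fin d) (Fin d) ℝ} (hA : IsStableFlow A) (x : Euc d) :
    Tendsto (fun t : ℝ => linFlow A t x) atTop (𝓝 0) := by
  have : x ∈ stableSet A := by rw [hA]; trivial
  exact this

lemma abs_coord_le_norm (x : Euc d) (i : Fin d) : |x i| ≤ ‖x‖ := by
  rw [EuclideanSpace.norm_eq]
  have h1 : x i ^ 2 ≤ ∑ j : Fin d, ‖x j‖ ^ 2 := by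
    simp only [Real.norm_eq_abs, sq_abs]
    exact Finset.single_le_sum (f := fun j => x j ^ 2) (fun j _ => sq_nonneg _)
      (Finset.mem_univ i)
  calc |x i| = Real.sqrt (x i ^ 2) := (Real.sqrt_sq_eq_abs _).symm
    _ ≤ _ := Real.sqrt_le_sqrt h1

/-- In finite dimension, stability implies the operator norms tend to `0`. -/
lemma flowMap_norm_tendsto {A : Matrix (Fin d) (Fin d) ℝ} (hA : IsStableFlow A) :
    Tendsto (fun t : ℝ => ‖flowMap A t‖) atTop (𝓝 0) := by
  have hbound : ∀ t : ℝ,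
      ‖flowMap A t‖ ≤ ∑ i : Fin d, ‖linFlow A t (EuclideanSpace.single i 1)‖ := by
    intro t
    refine ContinuousLinearMap.opNorm_le_bound _ (by positivity) ?_
    intro x
    have hxsum : x = ∑ i : Fin d, x i • EuclideanSpace.single i (1 : ℝ) := by
      have := (EuclideanSpace.basisFun (Fin d) ℝ).sum_repr x
      simp only [EuclideanSpace.basisFun_apply, EuclideanSpace.basisFun_repr] at this
      exact this.symm
    calc ‖flowMap A t x‖ = ‖∑ i : Fin d, x i • flowMap A t (EuclideanSpace.single i 1)‖ := by
          conv_lhs => rw [hxsum]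
          rw [map_sum]
          simp
      _ ≤ ∑ i : Fin d, ‖x i • flowMap A t (EuclideanSpace.single i 1)‖ := norm_sum_le _ _
      _ ≤ ∑ i : Fin d, ‖linFlow A t (EuclideanSpace.single i 1)‖ * ‖x‖ := by
          refine Finset.sum_le_sum fun i _ => ?_
          rw [norm_smul]
          rw [mul_comm]
          exact mul_le_mul_of_nonneg_left (by simpa using abs_coord_le_norm x i) (norm_nonneg _)
      _ = (∑ i : Fin d, ‖linFlow A t (EuclideanSpace.single i 1)‖) * ‖x‖ := by
          rw [Finset.sum_mul]
  have hsum : Tendsto (fun t : ℝ => ∑ i : Fin d, ‖linFlow A t (EuclideanSpace.single i 1)‖)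
      atTop (𝓝 0) := by
    have h0 : ∀ i : Fin d, Tendsto (fun t : ℝ => ‖linFlow A t (EuclideanSpace.single i (1:ℝ))‖)
        atTop (𝓝 0) := fun i => by
      simpa using (stable_tendsto hA (EuclideanSpace.single i 1)).norm
    simpa using tendsto_finset_sum Finset.univ (fun i (_ : i ∈ Finset.univ) => h0 i)
  exact squeeze_zero (fun t => norm_nonneg _) hbound hsum

/-- For a stable flow and `x ≠ 0`, `‖Φ_t x‖ → ∞` as `t → -∞`. -/
lemma norm_linFlow_atBot {A : Matrix (Fin d) (Fin d) ℝ} (hA : IsStableFlow A) {x : Euc d}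
    (hx : x ≠ 0) : Tendsto (fun t : ℝ => ‖linFlow A t x‖) atBot atTop := by
  have key : ∀ t : ℝ, ‖x‖ ≤ ‖flowMap A (-t)‖ * ‖linFlow A t x‖ := by
    intro t
    have h1 : linFlow A (-t) (linFlow A t x) = x := by
      rw [← linFlow_add, neg_add_cancel, linFlow_zero]
    calc ‖x‖ = ‖flowMap A (-t) (linFlow A t x)‖ := by rw [show flowMap A (-t) (linFlow A t x) = x from h1]
      _ ≤ ‖flowMap A (-t)‖ * ‖linFlow A t x‖ := (flowMap A (-t)).le_opNorm _
  rw [Filter.tendsto_atTop]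
  intro b
  have hx0 : 0 < ‖x‖ := norm_pos_iff.mpr hx
  have hc : (0:ℝ) < max b 1 := lt_of_lt_of_le one_pos (le_max_right _ _)
  have h1 : ∀ᶠ s : ℝ in atTop, ‖flowMap A s‖ * max b 1 < ‖x‖ := by
    have h2 := (flowMap_norm_tendsto hA).mul_const (max b 1)
    rw [zero_mul] at h2
    exact h2.eventually_lt_const hx0
  have h3 : ∀ᶠ t : ℝ in atBot, ‖flowMap A (-t)‖ * max b 1 < ‖x‖ :=
    tendsto_neg_atBot_atTop.eventually h1
  filter_upwards [h3] with t ht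
  have hL : 0 < ‖linFlow A t x‖ := by
    rw [norm_pos_iff]
    intro h0
    exact hx ((linFlow_eq_zero_iff A t x).mp h0)
  have hkey := key t
  have hN : 0 ≤ ‖flowMap A (-t)‖ := norm_nonneg _
  nlinarith [le_max_left b (1:ℝ)]

end DPaux
end
noncomputable section
namespace DPaux
open Filter Topology Matrix Metric
open scoped ENNReal NNReal

variable {d : ℕ}

lemma linFlow_fix {A : Matrix (Fin d) (Fin d) ℝ} {T : ℝ} (hT : 0 < T) {x : Euc d}
    (hfix : linFlow A T x = x) (hA : IsStableFlow A) : x = 0 := by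
  have hn : ∀ n : ℕ, linFlow A (n * T) x = x := by
    intro n
    induction n with
    | zero => simpa using linFlow_zero A x
    | succ n ih =>
      have hcast : ((n + 1 : ℕ) : ℝ) * T = T + n * T := by push_cast; ring
      rw [hcast, linFlow_add, ih, hfix]
  have h1 : Tendsto (fun n : ℕ => linFlow A ((n : ℝ) * T) x) atTop (𝓝 0) :=
    (stable_tendsto hA x).comp (tendsto_natCast_atTop_atTop.atTop_mul_const hT)
  have h2 : Tendsto (fun _ : ℕ => x) atTop (𝓝 0) := h1.congr fun n => hn n
  exact tendsto_nhds_unique tendsto_const_nhds h2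

lemma orbit_inj {A : Matrix (Fin d) (Fin d) ℝ} (hA : IsStableFlow A) {x : Euc d} (hx : x ≠ 0) :
    Function.Injective fun t : ℝ => linFlow A t x := by
  have key : ∀ s t : ℝ, s < t → linFlow A s x = linFlow A t x → False := by
    intro s t hlt hst
    have hfix : linFlow A (t - s) x = x := by
      have h1 := congrArg (linFlow A (-s)) hst
      rw [← linFlow_add, ← linFlow_add, neg_add_cancel, linFlow_zero] at h1
      rw [show t - s = -s + t by ring]
      exact h1.symm
    exact hx (linFlow_fix (by linarith) hfix hA)
  intro s t hst
  rcases lt_trichotomy s t with hlt | heq | hgt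
  · exact absurd hst (fun hc => key s t hlt hc)
  · exact heq
  · exact absurd hst.symm (fun hc => key t s hgt hc)

/-- The central reparametrization lemma. -/
lemma exists_reparam {A B : Matrix (Fin d) (Fin d) ℝ} (hA : IsStableFlow A)
    (hB : IsStableFlow B) {h : Euc d ≃ₜ Euc d} (h0 : h 0 = 0) (he : EquivVia A B h)
    {x : Euc d} (hx : x ≠ 0) :
    ∃ τ : ℝ → ℝ, Continuous τ ∧ Tendsto τ atTop atTop ∧
      ∀ t : ℝ, h (linFlow A t x) = linFlow B (τ t) (h x) := by
  have hz : h x ≠ 0 := fun hc => hx (h.injective (by rw [hc, h0]))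
  set z := h x with hzdef
  -- choose τ
  have hmem : ∀ t : ℝ, ∃ s : ℝ, linFlow B s z = h (linFlow A t x) := by
    intro t
    have h1 : h (linFlow A t x) ∈ flowOrbit B z := by
      rw [hzdef, ← he x]
      exact Set.mem_image_of_mem _ ⟨t, rfl⟩
    exact h1
  choose τ hτ using hmem
  have hFcont : Continuous fun t : ℝ => h (linFlow A t x) :=
    h.continuous.comp (linFlow_cont A x)
  have hFne : ∀ t : ℝ, h (linFlow A t x) ≠ 0 := by
    intro t hc
    have h1 : linFlow A t x = 0 := h.injective (by rw [hc, h0])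
    exact hx ((linFlow_eq_zero_iff A t x).mp h1)
  have horbinj := orbit_inj hB hz
  -- norms of the B-orbit of z
  have hnormTop : Tendsto (fun s : ℝ => ‖linFlow B s z‖) atTop (𝓝 0) := by
    simpa using (stable_tendsto hB z).norm
  have hnormBot : Tendsto (fun s : ℝ => ‖linFlow B s z‖) atBot atTop :=
    norm_linFlow_atBot hB hz
  -- continuity of τ
  have hcont : Continuous τ := by
    rw [continuous_iff_continuousAt]
    intro t₀
    set I : Set ℝ := Set.Icc (t₀ - 1) (t₀ + 1) with hIdef
    have hInonempty : I.Nonempty := ⟨t₀, by constructor <;> linarith⟩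
    have hIcomp : IsCompact I := isCompact_Icc
    -- min and max of ‖F‖ on I
    obtain ⟨tm, htmI, htm⟩ := hIcomp.exists_isMinOn hInonempty
      (hFcont.norm.continuousOn)
    obtain ⟨tM, htMI, htM⟩ := hIcomp.exists_isMaxOn hInonempty
      (hFcont.norm.continuousOn)
    set m : ℝ := ‖h (linFlow A tm x)‖ with hmdef
    set M : ℝ := ‖h (linFlow A tM x)‖ with hMdef
    have hm0 : 0 < m := norm_pos_iff.mpr (hFne tm)
    -- S₁ : for s ≥ S₁ the norm is < m
    obtain ⟨S₁, hS₁⟩ := (eventually_atTop).mp (hnormTop.eventually_lt_const hm0)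
    -- S₀ : for s ≤ S₀ the norm is > M
    obtain ⟨S₀, hS₀⟩ := (eventually_atBot).mp (hnormBot.eventually_gt_atTop M)
    have hτI : ∀ t ∈ I, τ t ∈ Set.Icc S₀ S₁ := by
      intro t htI
      have hnorm : ‖linFlow B (τ t) z‖ = ‖h (linFlow A t x)‖ := by rw [hτ t]
      constructor
      · by_contra hcon
        push_neg at hcon
        have h2 := hS₀ (τ t) (le_of_lt hcon)
        rw [hnorm] at h2
        exact absurd (htM htI) (by simpa [hMdef] using not_le.mpr h2)
      · by_contra hcon
        push_neg at hcon
        have h2 := hS₁ (τ t) (le_of_lt hcon)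
        rw [hnorm] at h2
        exact absurd (htm htI) (by simpa [hmdef] using not_le.mpr h2)
    -- the orbit restricted to the compact interval is an embedding
    set g : Set.Icc S₀ S₁ → Euc d := fun s => linFlow B (s : ℝ) z with hgdef
    have hginj : Function.Injective g := by
      intro a b hab
      exact Subtype.ext (horbinj hab)
    have hgcont : Continuous g := (linFlow_cont B z).comp continuous_subtype_val
    have hgemb := hgcont.isClosedEmbedding hginj
    have hfI : Continuous fun t : I => (⟨τ (t : ℝ), hτI t t.2⟩ : Set.Icc S₀ S₁) := by
      rw [hgemb.toIsEmbedding.continuous_iff]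
      have : (g ∘ fun t : I => (⟨τ (t : ℝ), hτI t t.2⟩ : Set.Icc S₀ S₁)) =
          fun t : I => h (linFlow A (t : ℝ) x) := by
        funext t
        simp only [Function.comp_apply, hgdef]
        exact hτ (t : ℝ)
      rw [this]
      exact hFcont.comp continuous_subtype_val
    have hτI' : ContinuousOn τ I := by
      rw [continuousOn_iff_continuous_restrict]
      have : Set.restrict I τ = fun t : I => ((⟨τ (t : ℝ), hτI t t.2⟩ : Set.Icc S₀ S₁) : ℝ) := rfl
      show Continuous (fun t : I => ((⟨τ (t : ℝ), hτI t t.2⟩ : Set.Icc S₀ S₁) : ℝ))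
      exact continuous_subtype_val.comp hfI
    exact hτI'.continuousAt (Icc_mem_nhds (by linarith) (by linarith))
  -- τ tends to infinity
  have htend : Tendsto τ atTop atTop := by
    rw [Filter.tendsto_atTop]
    intro C
    -- a positive lower bound for ‖Ψ_s z‖ on (-∞, C]
    obtain ⟨S₀, hS₀⟩ := (eventually_atBot).mp (hnormBot.eventually_gt_atTop 1)
    set S₀' : ℝ := min S₀ C with hS₀'def
    have hcompact : IsCompact (Set.Icc S₀' C) := isCompact_Icc
    have hne : (Set.Icc S₀' C).Nonempty := ⟨C, ⟨min_le_right _ _, le_refl _⟩⟩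
    obtain ⟨sm, hsmI, hsm⟩ := hcompact.exists_isMinOn hne
      ((linFlow_cont B z).norm.continuousOn)
    set m' : ℝ := ‖linFlow B sm z‖ with hm'def
    have hm'0 : 0 < m' := norm_pos_iff.mpr (by simp [linFlow_eq_zero_iff, hz])
    set c : ℝ := min 1 m' with hcdef
    have hc0 : 0 < c := lt_min one_pos hm'0
    have hlower : ∀ s : ℝ, s ≤ C → c ≤ ‖linFlow B s z‖ := by
      intro s hsC
      rcases le_or_gt s S₀' with hcase | hcase
      · have := hS₀ s (le_trans hcase (min_le_left _ _))
        exact le_trans (min_le_left _ _) (le_of_lt this)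
      · exact le_trans (min_le_right _ _) (hsm ⟨le_of_lt hcase, hsC⟩)
    have hFtend : Tendsto (fun t : ℝ => ‖h (linFlow A t x)‖) atTop (𝓝 0) := by
      have h1 : Tendsto (fun t : ℝ => h (linFlow A t x)) atTop (𝓝 (h 0)) :=
        (h.continuous.tendsto 0).comp (stable_tendsto hA x)
      rw [h0] at h1
      simpa using h1.norm
    filter_upwards [hFtend.eventually_lt_const hc0] with t ht
    by_contra hcon
    push_neg at hcon
    have h2 := hlower (τ t) (le_of_lt hcon)
    rw [hτ t] at h2
    linarith
  exact ⟨τ, hcont, htend, fun t => (hτ t).symm⟩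

end DPaux
end
noncomputable section
namespace DPaux
open Filter Topology Matrix Metric
open scoped ENNReal NNReal

variable {d : ℕ}

/-- limsup along `atTop` does not decrease under pre-composition with a continuous map
tending to `atTop`. -/
lemma limsup_le_limsup_comp (g : ℝ → ℝ≥0∞) {σ : ℝ → ℝ} (hσc : Continuous σ)
    (hσ : Tendsto σ atTop atTop) :
    limsup g atTop ≤ limsup (fun t => g (σ t)) atTop := by
  refine le_of_forall_lt_imp_le_of_dense fun c hc => ?_
  have hfreq : ∃ᶠ s in atTop, c < g s := frequently_lt_of_lt_limsup (by isBoundedDefault) hc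
  refine le_limsup_of_frequently_le ?_ (by isBoundedDefault)
  rw [frequently_atTop]
  intro T
  obtain ⟨s, hs, hcs⟩ := (frequently_atTop.mp hfreq) (σ T)
  obtain ⟨t₁, hσt₁s, ht₁T⟩ := ((hσ.eventually_ge_atTop s).and (eventually_ge_atTop T)).exists
  obtain ⟨t, htI, hσt⟩ := intermediate_value_Icc ht₁T hσc.continuousOn ⟨hs, hσt₁s⟩
  exact ⟨t, htI.1, by rw [hσt]; exact hcs.le⟩

lemma zero_mem_distortion (hd : 0 < d) {B : Matrix (Fin d) (Fin d) ℝ} :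
    (0 : Euc d) ∈ distortionSet B := by
  refine ⟨1, one_pos, fun ε hε => ?_⟩
  set y : Euc d := EuclideanSpace.single (⟨0, hd⟩ : Fin d) (ε / 2) with hydef
  have hyn : ‖y‖ = ε / 2 := by
    rw [hydef, EuclideanSpace.norm_single, Real.norm_eq_abs, abs_of_pos (by linarith)]
  have hy0 : y ≠ 0 := by
    intro hc
    rw [hc, norm_zero] at hyn
    linarith
  refine ⟨y, ?_, hy0, ?_⟩
  · rw [mem_ball, dist_eq_norm, sub_zero, hyn]
    linarith
  · intro ρ _ _
    have hconst : ∀ t : ℝ, distortRatio B 0 y ρ t = 1 := by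
      intro t
      have hne : ‖linFlow B (ρ t) y‖ ≠ 0 :=
        norm_ne_zero_iff.mpr (fun hc => hy0 ((linFlow_eq_zero_iff B (ρ t) y).mp hc))
      rw [distortRatio, linFlow_zero_pt, zero_sub, norm_neg, div_self hne, ENNReal.ofReal_one]
    calc ENNReal.ofReal 1 = (1 : ℝ≥0∞) := ENNReal.ofReal_one
      _ = limsup (fun _ : ℝ => (1 : ℝ≥0∞)) atTop := (limsup_const _).symm
      _ = limsup (fun t => distortRatio B 0 y ρ t) atTop :=
          limsup_congr (Eventually.of_forall fun t => (hconst t).symm)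
      _ ≤ _ := le_refl _

lemma equivVia_symm {A B : Matrix (Fin d) (Fin d) ℝ} {h : Euc d ≃ₜ Euc d}
    (he : EquivVia A B h) : EquivVia B A h.symm := by
  intro z
  have h1 := he (h.symm z)
  rw [h.apply_symm_apply] at h1
  rw [← h1]
  exact h.toEquiv.symm_image_image _

lemma isH1_symm {h : Euc d ≃ₜ Euc d} (hh : IsH1 h) : IsH1 h.symm := by
  obtain ⟨h0, r, hr, K, hK1, hK2⟩ := hh
  refine ⟨(h.toEquiv.symm_apply_eq).mpr h0.symm, r, hr, K, hK2, ?_⟩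
  rw [Homeomorph.symm_symm]
  exact hK1

end DPaux
end
noncomputable section
namespace DPaux
open Filter Topology Matrix Metric
open scoped ENNReal NNReal

variable {d : ℕ}

lemma distorting_image {A B : Matrix (Fin d) (Fin d) ℝ} (hd : 0 < d)
    (hA : IsStableFlow A) (hB : IsStableFlow B) {h : Euc d ≃ₜ Euc d} (hh : IsH1 h)
    (he : EquivVia A B h) {x : Euc d} (hxD : x ∈ distortionSet A) :
    h x ∈ distortionSet B := by
  obtain ⟨h0, r, hr, K, hK1, hK2⟩ := hh
  obtain ⟨δ, hδ, hdist⟩ := hxD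
  by_cases hx : x = 0
  · subst hx; rw [h0]; exact zero_mem_distortion hd
  have hz : h x ≠ 0 := fun hc => hx (h.injective (by rw [hc, h0]))
  set K' : ℝ := max (K : ℝ) 1 with hK'def
  have hK'1 : (1 : ℝ) ≤ K' := le_max_right _ _
  have hK'0 : (0 : ℝ) < K' := lt_of_lt_of_le one_pos hK'1
  have hL1 : ∀ u ∈ ball (0 : Euc d) r, ∀ v ∈ ball (0 : Euc d) r,
      dist (h u) (h v) ≤ K' * dist u v := by
    intro u hu v hv
    calc dist (h u) (h v) ≤ (K : ℝ) * dist u v := hK1.dist_le_mul u hu v hv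
      _ ≤ K' * dist u v := mul_le_mul_of_nonneg_right (le_max_left _ _) dist_nonneg
  have hL2 : ∀ u ∈ ball (0 : Euc d) r, ∀ v ∈ ball (0 : Euc d) r,
      dist (h.symm u) (h.symm v) ≤ K' * dist u v := by
    intro u hu v hv
    calc dist (h.symm u) (h.symm v) ≤ (K : ℝ) * dist u v := hK2.dist_le_mul u hu v hv
      _ ≤ K' * dist u v := mul_le_mul_of_nonneg_right (le_max_left _ _) dist_nonneg
  have hc0 : Tendsto (⇑h) (𝓝 (0 : Euc d)) (𝓝 (0 : Euc d)) := by
    have h1 := h.continuous.tendsto (0 : Euc d)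
    rwa [h0] at h1
  obtain ⟨r₀, hr₀, hr₀r⟩ := Metric.tendsto_nhds_nhds.mp hc0 r hr
  set r' : ℝ := min r₀ r with hr'def
  have hr'0 : 0 < r' := lt_min hr₀ hr
  -- the key pointwise estimate
  have hest : ∀ a b : Euc d, ‖a‖ < r' → ‖b‖ < r' → b ≠ 0 →
      ‖a - b‖ / ‖b‖ ≤ (K' * K') * (‖h a - h b‖ / ‖h b‖) := by
    intro a b ha hb hb0
    have haB : a ∈ ball (0 : Euc d) r := by
      rw [mem_ball, dist_zero_right]; exact lt_of_lt_of_le ha (min_le_right _ _)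
    have hbB : b ∈ ball (0 : Euc d) r := by
      rw [mem_ball, dist_zero_right]; exact lt_of_lt_of_le hb (min_le_right _ _)
    have haB' : h a ∈ ball (0 : Euc d) r := by
      rw [mem_ball]
      exact hr₀r (by rw [dist_zero_right]; exact lt_of_lt_of_le ha (min_le_left _ _))
    have hbB' : h b ∈ ball (0 : Euc d) r := by
      rw [mem_ball]
      exact hr₀r (by rw [dist_zero_right]; exact lt_of_lt_of_le hb (min_le_left _ _))
    have h1 : ‖a - b‖ ≤ K' * ‖h a - h b‖ := by
      have h2 := hL2 (h a) haB' (h b) hbB'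
      rw [h.symm_apply_apply, h.symm_apply_apply, dist_eq_norm, dist_eq_norm] at h2
      exact h2
    have h2 : ‖h b‖ ≤ K' * ‖b‖ := by
      have h3 := hL1 b hbB 0 (mem_ball_self hr)
      rw [h0, dist_zero_right, dist_zero_right] at h3
      exact h3
    have hbpos : 0 < ‖b‖ := norm_pos_iff.mpr hb0
    have hhbpos : 0 < ‖h b‖ :=
      norm_pos_iff.mpr (fun hc => hb0 (h.injective (by rw [hc, h0])))
    rw [show (K' * K') * (‖h a - h b‖ / ‖h b‖) = ((K' * K') * ‖h a - h b‖) / ‖h b‖ from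
      (mul_div_assoc _ _ _).symm, div_le_div_iff₀ hbpos hhbpos]
    calc ‖a - b‖ * ‖h b‖ ≤ (K' * ‖h a - h b‖) * (K' * ‖b‖) :=
          mul_le_mul h1 h2 (norm_nonneg _) (by positivity)
      _ = (K' * K') * ‖h a - h b‖ * ‖b‖ := by ring
  -- main argument
  refine ⟨δ / (K' * K'), by positivity, ?_⟩
  intro ε hε
  obtain ⟨ε₁, hε₁, hε₁h⟩ := Metric.tendsto_nhds_nhds.mp (h.continuous.tendsto x) ε hε
  obtain ⟨y, hyball, hy0, hylim⟩ := hdist ε₁ hε₁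
  have hy' : h y ∈ ball (h x) ε := by rw [mem_ball]; exact hε₁h (mem_ball.mp hyball)
  have hhy0 : h y ≠ 0 := fun hc => hy0 (h.injective (by rw [hc, h0]))
  refine ⟨h y, hy', hhy0, ?_⟩
  intro ρ' hρ'c hρ't
  obtain ⟨τ, hτc, hτt, hτ⟩ := exists_reparam hA hB h0 he hx
  have h0s : h.symm 0 = 0 := (h.toEquiv.symm_apply_eq).mpr h0.symm
  have heS : EquivVia B A h.symm := equivVia_symm he
  obtain ⟨σx, hσxc, hσxt, hσx⟩ := exists_reparam hB hA h0s heS hz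
  obtain ⟨σy, hσyc, hσyt, hσy⟩ := exists_reparam hB hA h0s heS hhy0
  have hσx' : ∀ s : ℝ, linFlow B s (h x) = h (linFlow A (σx s) x) := by
    intro s
    have h1 := hσx s
    rw [h.symm_apply_apply] at h1
    calc linFlow B s (h x) = h (h.symm (linFlow B s (h x))) := (h.apply_symm_apply _).symm
      _ = h (linFlow A (σx s) x) := by rw [h1]
  have hσy' : ∀ s : ℝ, linFlow B s (h y) = h (linFlow A (σy s) y) := by
    intro s
    have h1 := hσy s
    rw [h.symm_apply_apply] at h1
    calc linFlow B s (h y) = h (h.symm (linFlow B s (h y))) := (h.apply_symm_apply _).symm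
      _ = h (linFlow A (σy s) y) := by rw [h1]
  have hτσ : ∀ s : ℝ, τ (σx s) = s := by
    intro s
    have h1 : linFlow B (τ (σx s)) (h x) = linFlow B s (h x) := by
      rw [← hτ (σx s), ← hσx' s]
    exact orbit_inj hB hz h1
  set ρ : ℝ → ℝ := fun s => σy (ρ' (τ s)) with hρdef
  have hρc : Continuous ρ := hσyc.comp (hρ'c.comp hτc)
  have hρt : Tendsto ρ atTop atTop := hσyt.comp (hρ't.comp hτt)
  have hmain := hylim ρ hρc hρt
  have hcomp := limsup_le_limsup_comp (fun t => distortRatio A x y ρ t) hσxc hσxt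
  have haN : Tendsto (fun t : ℝ => ‖linFlow A (σx t) x‖) atTop (𝓝 0) := by
    simpa using ((stable_tendsto hA x).comp hσxt).norm
  have hbN : Tendsto (fun t : ℝ => ‖linFlow A (σy (ρ' t)) y‖) atTop (𝓝 0) := by
    simpa using ((stable_tendsto hA y).comp (hσyt.comp hρ't)).norm
  have hptwise : ∀ᶠ t : ℝ in atTop,
      distortRatio A x y ρ (σx t) ≤
        ENNReal.ofReal (K' * K') * distortRatio B (h x) (h y) ρ' t := by
    filter_upwards [haN.eventually_lt_const hr'0, hbN.eventually_lt_const hr'0] with t ha hb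
    have hbne : linFlow A (σy (ρ' t)) y ≠ 0 :=
      fun hc => hy0 ((linFlow_eq_zero_iff A _ y).mp hc)
    have hEq1 : ρ (σx t) = σy (ρ' t) := by rw [hρdef]; simp only; rw [hτσ t]
    simp only [distortRatio, hEq1, hσx' t, hσy' (ρ' t)]
    rw [← ENNReal.ofReal_mul (by positivity)]
    exact ENNReal.ofReal_le_ofReal (hest _ _ ha hb hbne)
  have hlim2 : limsup (fun t => distortRatio A x y ρ (σx t)) atTop ≤
      ENNReal.ofReal (K' * K') *
        limsup (fun t => distortRatio B (h x) (h y) ρ' t) atTop := by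
    calc limsup (fun t => distortRatio A x y ρ (σx t)) atTop
        ≤ limsup (fun t => ENNReal.ofReal (K' * K') * distortRatio B (h x) (h y) ρ' t) atTop :=
          limsup_le_limsup hptwise
      _ = _ := ENNReal.limsup_const_mul_of_ne_top ENNReal.ofReal_ne_top
  have hfinal : ENNReal.ofReal δ ≤
      ENNReal.ofReal (K' * K') * limsup (fun t => distortRatio B (h x) (h y) ρ' t) atTop :=
    le_trans hmain (le_trans hcomp hlim2)
  rw [ENNReal.ofReal_div_of_pos (by positivity),
    ENNReal.div_le_iff_le_mul (Or.inl (ENNReal.ofReal_pos.mpr (by positivity)).ne')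
      (Or.inl ENNReal.ofReal_ne_top)]
  rw [mul_comm] at hfinal
  exact hfinal

end DPaux
end


/-- **Lemma 3.2**: if two stable linear flows on `ℝ^d` are Lipschitz equivalent via `h`, then
`h` maps the set of distortion points of the first flow onto that of the second. -/
theorem distortionSet_preserved (d : ℕ) (hd : 0 < d) (A B : Matrix (Fin d) (Fin d) ℝ)
    (hA : IsStableFlow A) (hB : IsStableFlow B)
    (h : Euc d ≃ₜ Euc d) (hh : IsH1 h) (he : EquivVia A B h) :
    ⇑h '' distortionSet A = distortionSet B := by
  apply Set.Subset.antisymm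
  · rintro w ⟨x, hx, rfl⟩
    exact DPaux.distorting_image hd hA hB hh he hx
  · intro z hzD
    refine ⟨h.symm z, ?_, h.apply_symm_apply z⟩
    exact DPaux.distorting_image hd hB hA (DPaux.isH1_symm hh) (DPaux.equivVia_symm he) hzD
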